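/- arXiv:2102.13098 — 4 statements merged into one kernel-verified Lean document; each statement's English description precedes it below -/
import Mathlib

section
/- Fix a natural number t ≥ 1. Let Z_1, ..., Z_m be independent real-valued random variables such that for every i: (i) E[Z_i^ℓ] = 0 for every odd integer ℓ with 1 ≤ ℓ ≤ t, and (ii) E[|Z_i|^ℓ]^{1/ℓ} ≤ ℓ · σ_i for every integer 1 ≤ ℓ ≤ t, where σ_1, ..., σ_m are nonnegative reals. Then for every integer 1 ≤ ℓ ≤ t, E[(Z_1 + ··· + Z_m)^ℓ]^{1/ℓ} ≤ ℓ · (σ_1² + ··· + σ_m²)^{1/2}. -/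
open MeasureTheory ProbabilityTheory

section AuxSumSubexp
open Finset Nat

lemma nat_binary' (A B : ℕ) :
    (2*A+2*B)! * (A ! * ((2*A)^(2*A) * ((2*B)^(2*B) * B !)))
      ≤ (2*A+2*B)^(2*A+2*B) * ((A+B)! * ((2*A)! * (2*B)!)) := by
  set C := Nat.choose (2*A+2*B) (2*A) with hC
  have h3 : C * (2*A)! * (2*B)! = (2*A+2*B)! := by
    have := Nat.choose_mul_factorial_mul_factorial (Nat.le_add_right (2*A) (2*B))
    simpa [Nat.add_sub_cancel_left] using this
  have h1 : C * ((2*A)^(2*A) * (2*B)^(2*B)) ≤ (2*A+2*B)^(2*A+2*B) := by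
    have hexp := add_pow (2*A) (2*B) (2*A+2*B)
    have hmem : 2*A ∈ Finset.range (2*A+2*B+1) := by
      simp [Nat.lt_succ_iff, Nat.le_add_right]
    have hle := Finset.single_le_sum
      (f := fun k => (2*A)^k * (2*B)^(2*A+2*B-k) * Nat.choose (2*A+2*B) k)
      (fun k _ => Nat.zero_le _) hmem
    calc C * ((2*A)^(2*A) * (2*B)^(2*B))
        = (2*A)^(2*A) * (2*B)^(2*A+2*B-2*A) * C := by
          rw [Nat.add_sub_cancel_left]; ring
      _ ≤ ∑ k ∈ Finset.range (2*A+2*B+1),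
            (2*A)^k * (2*B)^(2*A+2*B-k) * Nat.choose (2*A+2*B) k := hle
      _ = (2*A+2*B)^(2*A+2*B) := hexp.symm
  have h2 : A ! * B ! ≤ (A+B)! :=
    Nat.le_of_dvd (Nat.factorial_pos _) (Nat.factorial_mul_factorial_dvd_factorial_add A B)
  calc (2*A+2*B)! * (A ! * ((2*A)^(2*A) * ((2*B)^(2*B) * B !)))
      = ((2*A)! * (2*B)!) * ((C * ((2*A)^(2*A) * (2*B)^(2*B))) * (A ! * B !)) := by
        rw [← h3]; ring
    _ ≤ ((2*A)! * (2*B)!) * ((2*A+2*B)^(2*A+2*B) * (A+B)!) :=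
        Nat.mul_le_mul_left _ (Nat.mul_le_mul h1 h2)
    _ = (2*A+2*B)^(2*A+2*B) * ((A+B)! * ((2*A)! * (2*B)!)) := by ring

lemma nat_key' {ι : Type*} (s : Finset ι) (β : ι → ℕ) :
    (2 * ∑ i ∈ s, β i)! * ((∏ i ∈ s, (β i)!) * ∏ i ∈ s, (2*β i)^(2*β i))
      ≤ (2 * ∑ i ∈ s, β i)^(2 * ∑ i ∈ s, β i) * ((∑ i ∈ s, β i)! * ∏ i ∈ s, (2*β i)!) := by
  induction s using Finset.cons_induction with
  | empty => simp
  | cons a s ha ih =>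
    rw [Finset.sum_cons, Finset.prod_cons, Finset.prod_cons, Finset.prod_cons]
    set A := β a
    set SB := ∑ i ∈ s, β i
    set Pβ := ∏ i ∈ s, (β i)!
    set Pw := ∏ i ∈ s, (2*β i)^(2*β i)
    set Pf := ∏ i ∈ s, (2*β i)!
    have hpos : 0 < (2*SB)! := Nat.factorial_pos _
    refine Nat.le_of_mul_le_mul_right ?_ hpos
    have hb := nat_binary' A SB
    calc (2*(A+SB))! * (A ! * Pβ * ((2*A)^(2*A) * Pw)) * (2*SB)!
        = ((2*A+2*SB)! * (A ! * (2*A)^(2*A))) * ((2*SB)! * (Pβ * Pw)) := by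
          rw [Nat.mul_add]; ring
      _ ≤ ((2*A+2*SB)! * (A ! * (2*A)^(2*A))) * ((2*SB)^(2*SB) * (SB ! * Pf)) :=
          Nat.mul_le_mul_left _ ih
      _ = ((2*A+2*SB)! * (A ! * ((2*A)^(2*A) * ((2*SB)^(2*SB) * SB !)))) * Pf := by ring
      _ ≤ ((2*A+2*SB)^(2*A+2*SB) * ((A+SB)! * ((2*A)! * (2*SB)!))) * Pf :=
          Nat.mul_le_mul_right _ hb
      _ = (2*(A+SB))^(2*(A+SB)) * ((A+SB)! * ((2*A)! * Pf)) * (2*SB)! := by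
          rw [Nat.mul_add]; ring

lemma mult_key' {m : ℕ} (k : ℕ) (β : Fin m → ℕ) (hsum : ∑ i, β i = k) :
    Nat.multinomial Finset.univ (fun i => 2*β i) * ∏ i, (2*β i)^(2*β i)
      ≤ (2*k)^(2*k) * Nat.multinomial Finset.univ β := by
  have hs2 : ∑ i, 2*β i = 2*k := by rw [← Finset.mul_sum, hsum]
  have spec1 := Nat.multinomial_spec Finset.univ β
  have spec2 := Nat.multinomial_spec Finset.univ (fun i => 2*β i)
  rw [hsum] at spec1
  rw [hs2] at spec2
  have key := nat_key' Finset.univ β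
  rw [hsum] at key
  have hposβ : 0 < ∏ i, (β i)! := Finset.prod_pos fun i _ => Nat.factorial_pos _
  have hpos2 : 0 < ∏ i : Fin m, (2*β i)! := Finset.prod_pos fun i _ => Nat.factorial_pos _
  refine Nat.le_of_mul_le_mul_left ?_ (Nat.mul_pos hpos2 hposβ)
  calc (∏ i : Fin m, (2*β i)!) * (∏ i, (β i)!) *
        (Nat.multinomial Finset.univ (fun i => 2*β i) * ∏ i, (2*β i)^(2*β i))
      = (2*k)! * ((∏ i, (β i)!) * ∏ i, (2*β i)^(2*β i)) := by rw [← spec2]; ring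
    _ ≤ (2*k)^(2*k) * (k ! * ∏ i, (2*β i)!) := key
    _ = (∏ i : Fin m, (2*β i)!) * (∏ i, (β i)!) *
          ((2*k)^(2*k) * Nat.multinomial Finset.univ β) := by rw [← spec1]; ring

lemma prod_integral_aux {Ω ι : Type*} [MeasurableSpace Ω] {μ : Measure Ω}
    [IsProbabilityMeasure μ] (W : ι → Ω → ℝ) (hW : ∀ i, Measurable (W i))
    (hindep : iIndepFun W μ)
    (hint : ∀ i, Integrable (W i) μ) (s : Finset ι) :
    Integrable (fun ω => ∏ i ∈ s, W i ω) μ ∧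
      ∫ ω, ∏ i ∈ s, W i ω ∂μ = ∏ i ∈ s, ∫ ω, W i ω ∂μ := by
  induction s using Finset.cons_induction with
  | empty => simp
  | cons a s ha ih =>
    have hfun : ∀ ω, ∏ i ∈ Finset.cons a s ha, W i ω = (∏ i ∈ s, W i ω) * W a ω := by
      intro ω; rw [Finset.prod_cons]; ring
    have hIndep : IndepFun (∏ j ∈ s, W j) (W a) μ :=
      hindep.indepFun_finsetProd_of_notMem hW ha
    have hIndep' : IndepFun (fun ω => ∏ j ∈ s, W j ω) (W a) μ := by
      have : (∏ j ∈ s, W j) = fun ω => ∏ j ∈ s, W j ω := by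
        funext ω; simp [Finset.prod_apply]
      rwa [this] at hIndep
    have hint' : Integrable (fun ω => (∏ i ∈ s, W i ω) * W a ω) μ :=
      hIndep'.integrable_mul ih.1 (hint a)
    constructor
    · exact hint'.congr (Filter.Eventually.of_forall fun ω => (hfun ω).symm)
    · calc ∫ ω, ∏ i ∈ Finset.cons a s ha, W i ω ∂μ
          = ∫ ω, (∏ i ∈ s, W i ω) * W a ω ∂μ :=
            integral_congr_ae (Filter.Eventually.of_forall hfun)
        _ = (∫ ω, ∏ i ∈ s, W i ω ∂μ) * ∫ ω, W a ω ∂μ :=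
            hIndep'.integral_mul_eq_mul_integral ih.1.aestronglyMeasurable (hint a).aestronglyMeasurable
        _ = ∏ i ∈ Finset.cons a s ha, ∫ ω, W i ω ∂μ := by
            rw [Finset.prod_cons, ih.2]; ring

end AuxSumSubexp

/-- Moment bound for sums of independent random variables with
vanishing odd moments and sub-exponential moment growth (Lemma `sum_subexp`). -/
theorem sum_subexp_moment_bound
    {Ω : Type*} [MeasurableSpace Ω] (μ : Measure Ω) [IsProbabilityMeasure μ]
    (t m : ℕ) (ht : 1 ≤ t)
    (Z : Fin m → Ω → ℝ) (σ : Fin m → ℝ)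
    (hσ : ∀ i, 0 ≤ σ i)
    (hmeas : ∀ i, Measurable (Z i))
    (hindep : iIndepFun Z μ)
    (hint : ∀ i, ∀ ℓ : ℕ, 1 ≤ ℓ → ℓ ≤ t → Integrable (fun ω => |Z i ω| ^ ℓ) μ)
    (hodd : ∀ i, ∀ ℓ : ℕ, 1 ≤ ℓ → ℓ ≤ t → Odd ℓ → ∫ ω, (Z i ω) ^ ℓ ∂μ = 0)
    (hmom : ∀ i, ∀ ℓ : ℕ, 1 ≤ ℓ → ℓ ≤ t →
      (∫ ω, |Z i ω| ^ ℓ ∂μ) ^ (1 / (ℓ : ℝ)) ≤ (ℓ : ℝ) * σ i) :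
    ∀ ℓ : ℕ, 1 ≤ ℓ → ℓ ≤ t →
      (∫ ω, (∑ i, Z i ω) ^ ℓ ∂μ) ^ (1 / (ℓ : ℝ))
        ≤ (ℓ : ℝ) * Real.sqrt (∑ i, σ i ^ 2) := by
  intro ℓ hℓ1 hℓt
  -- integrability of powers
  have int_pow : ∀ i (n : ℕ), n ≤ t → Integrable (fun ω => Z i ω ^ n) μ := by
    intro i n hn
    rcases Nat.eq_zero_or_pos n with h0 | h1
    · subst h0; simpa using integrable_const (1 : ℝ)
    · refine (hint i n h1 hn).mono' ((hmeas i).pow_const n).aestronglyMeasurable ?_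
      exact Filter.Eventually.of_forall fun ω => by
        rw [Real.norm_eq_abs, abs_pow]
  -- abs-power integrals are nonneg
  have habs_nonneg : ∀ i (n : ℕ), 0 ≤ ∫ ω, |Z i ω| ^ n ∂μ := fun i n =>
    integral_nonneg fun ω => pow_nonneg (abs_nonneg _) n
  -- key moment expansion
  have key : ∫ ω, (∑ i, Z i ω) ^ ℓ ∂μ
      = ∑ α ∈ Finset.piAntidiag Finset.univ ℓ,
          (Nat.multinomial Finset.univ α : ℝ) * ∏ i, ∫ ω, Z i ω ^ α i ∂μ := by
    have hbound : ∀ α ∈ Finset.piAntidiag Finset.univ ℓ, ∀ i : Fin m, α i ≤ t := by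
      intro α hα i
      rw [Finset.mem_piAntidiag] at hα
      exact le_trans (hα.1 ▸ Finset.single_le_sum
        (f := α) (fun j _ => Nat.zero_le _) (Finset.mem_univ i)) hℓt
    have hprod : ∀ α ∈ Finset.piAntidiag Finset.univ ℓ,
        Integrable (fun ω => ∏ i, Z i ω ^ α i) μ ∧
          ∫ ω, ∏ i, Z i ω ^ α i ∂μ = ∏ i, ∫ ω, Z i ω ^ α i ∂μ := by
      intro α hα
      exact prod_integral_aux (fun i ω => Z i ω ^ α i)
        (fun i => (hmeas i).pow_const (α i))
        (hindep.comp (fun i x => x ^ α i) fun i => measurable_id.pow_const (α i))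
        (fun i => int_pow i (α i) (hbound α hα i)) Finset.univ
    have hexp : (fun ω => (∑ i, Z i ω) ^ ℓ)
        = fun ω => ∑ α ∈ Finset.piAntidiag Finset.univ ℓ,
            (Nat.multinomial Finset.univ α : ℝ) * ∏ i, Z i ω ^ α i := by
      funext ω
      exact Finset.sum_pow_eq_sum_piAntidiag Finset.univ (fun i => Z i ω) ℓ
    rw [hexp, integral_finset_sum _ fun α hα => ((hprod α hα).1).const_mul _]
    exact Finset.sum_congr rfl fun α hα => by
      rw [integral_const_mul, (hprod α hα).2]
  -- odd term vanishing
  have hodd_term : ∀ α : Fin m → ℕ, (∑ i, α i) = ℓ → (∃ i, Odd (α i)) →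
      ∏ i, ∫ ω, Z i ω ^ α i ∂μ = 0 := by
    rintro α hαs ⟨i, hi⟩
    refine Finset.prod_eq_zero (Finset.mem_univ i) ?_
    refine hodd i (α i) (Nat.one_le_iff_ne_zero.2 ?_) ?_ hi
    · rintro h; rw [h] at hi; exact (Nat.not_odd_zero) hi
    · exact le_trans (hαs ▸ Finset.single_le_sum
        (f := α) (fun j _ => Nat.zero_le _) (Finset.mem_univ i)) hℓt
  rcases Nat.even_or_odd ℓ with heven | hodd_ℓ
  · -- even case
    obtain ⟨k, hk⟩ := heven
    have hk2 : ℓ = 2 * k := by omega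
    subst hk2
    set S := ∑ i, σ i ^ 2 with hS
    have hS0 : 0 ≤ S := Finset.sum_nonneg fun i _ => sq_nonneg _
    have hℓ0 : (2 * k : ℕ) ≠ 0 := by omega
    -- per-factor bound
    have hfac : ∀ (β : Fin m → ℕ), (∀ j, 2 * β j ≤ 2 * k) → ∀ i : Fin m,
        ∫ ω, Z i ω ^ (2 * β i) ∂μ ≤ ((2 * β i : ℕ) : ℝ) ^ (2 * β i) * σ i ^ (2 * β i) := by
      intro β hβ i
      have heq : ∫ ω, Z i ω ^ (2 * β i) ∂μ = ∫ ω, |Z i ω| ^ (2 * β i) ∂μ :=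
        integral_congr_ae (Filter.Eventually.of_forall fun ω =>
          ((even_two_mul (β i)).pow_abs (Z i ω)).symm)
      rw [heq]
      rcases Nat.eq_zero_or_pos (β i) with h0 | h1
      · rw [h0]; simp
      · have hn1 : 1 ≤ 2 * β i := by omega
        have hnt : 2 * β i ≤ t := le_trans (hβ i) hℓt
        have hm := hmom i (2 * β i) hn1 hnt
        have hI0 := habs_nonneg i (2 * β i)
        have : ∫ ω, |Z i ω| ^ (2 * β i) ∂μ ≤ (((2 * β i : ℕ) : ℝ) * σ i) ^ (2 * β i) := by
          have hpow := pow_le_pow_left₀ (Real.rpow_nonneg hI0 _) hm (2 * β i)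
          rwa [one_div, Real.rpow_inv_natCast_pow hI0 (by omega)] at hpow
        calc ∫ ω, |Z i ω| ^ (2 * β i) ∂μ ≤ (((2 * β i : ℕ) : ℝ) * σ i) ^ (2 * β i) := this
          _ = ((2 * β i : ℕ) : ℝ) ^ (2 * β i) * σ i ^ (2 * β i) := mul_pow _ _ _
    -- reduce sum to even multi-indices
    have hfilter : ∫ ω, (∑ i, Z i ω) ^ (2 * k) ∂μ
        = ∑ α ∈ (Finset.piAntidiag Finset.univ (2 * k)).filter (fun α => ∀ i, Even (α i)),
            (Nat.multinomial Finset.univ α : ℝ) * ∏ i, ∫ ω, Z i ω ^ α i ∂μ := by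
      rw [key]
      refine (Finset.sum_filter_of_ne ?_).symm
      intro α hα hne
      by_contra hnP
      push_neg at hnP
      obtain ⟨i, hi⟩ := hnP
      rw [Finset.mem_piAntidiag] at hα
      exact hne (by rw [hodd_term α hα.1 ⟨i, Nat.not_even_iff_odd.1 hi⟩, mul_zero])
    -- bijection with piAntidiag univ k
    have hbij : ∑ α ∈ (Finset.piAntidiag Finset.univ (2 * k)).filter (fun α => ∀ i, Even (α i)),
            (Nat.multinomial Finset.univ α : ℝ) * ∏ i, ∫ ω, Z i ω ^ α i ∂μ
        = ∑ β ∈ Finset.piAntidiag Finset.univ k,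
            (Nat.multinomial Finset.univ (fun j => 2 * β j) : ℝ)
              * ∏ i, ∫ ω, Z i ω ^ (2 * β i) ∂μ := by
      refine Finset.sum_nbij' (fun α j => α j / 2) (fun β j => 2 * β j) ?_ ?_ ?_ ?_ ?_
      · intro α hα
        rw [Finset.mem_filter, Finset.mem_piAntidiag] at hα
        beta_reduce
        rw [Finset.mem_piAntidiag]
        refine ⟨?_, fun i _ => Finset.mem_univ i⟩
        have h2 : 2 * ∑ j, α j / 2 = 2 * k := by
          rw [Finset.mul_sum]
          calc ∑ j, 2 * (α j / 2) = ∑ j, α j := by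
                refine Finset.sum_congr rfl fun j _ => Nat.two_mul_div_two_of_even (hα.2 j)
            _ = 2 * k := hα.1.1
        omega
      · intro β hβ
        rw [Finset.mem_piAntidiag] at hβ
        rw [Finset.mem_filter, Finset.mem_piAntidiag]
        exact ⟨⟨by rw [← Finset.mul_sum, hβ.1], fun i _ => Finset.mem_univ i⟩,
          fun i => even_two_mul _⟩
      · intro α hα
        rw [Finset.mem_filter] at hα
        have hfe : ∀ j, 2 * (α j / 2) = α j := fun j => Nat.two_mul_div_two_of_even (hα.2 j)
        simp only []
        funext j
        exact hfe j
      · intro β hβ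
        simp only []
        funext j
        omega
      · intro α hα
        rw [Finset.mem_filter] at hα
        have hfe : ∀ j, 2 * (α j / 2) = α j := fun j => Nat.two_mul_div_two_of_even (hα.2 j)
        simp only [hfe]
    -- per-term bound
    have hterm : ∀ β ∈ Finset.piAntidiag Finset.univ k,
        (Nat.multinomial Finset.univ (fun j => 2 * β j) : ℝ)
            * ∏ i, ∫ ω, Z i ω ^ (2 * β i) ∂μ
          ≤ ((2 * k : ℕ) : ℝ) ^ (2 * k) * (Nat.multinomial Finset.univ β : ℝ)
              * ∏ i, (σ i ^ 2) ^ β i := by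
      intro β hβ
      rw [Finset.mem_piAntidiag] at hβ
      have hβle : ∀ j, 2 * β j ≤ 2 * k := by
        intro j
        have hj : β j ≤ k :=
          le_trans (Finset.single_le_sum (f := β) (fun j _ => Nat.zero_le _) (Finset.mem_univ j))
            (le_of_eq hβ.1)
        omega
      have hprodle : ∏ i, ∫ ω, Z i ω ^ (2 * β i) ∂μ
          ≤ ∏ i, (((2 * β i : ℕ) : ℝ) ^ (2 * β i) * σ i ^ (2 * β i)) := by
        refine Finset.prod_le_prod ?_ ?_
        · intro i _
          have heq : ∫ ω, Z i ω ^ (2 * β i) ∂μ = ∫ ω, |Z i ω| ^ (2 * β i) ∂μ :=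
            integral_congr_ae (Filter.Eventually.of_forall fun ω =>
              ((even_two_mul (β i)).pow_abs (Z i ω)).symm)
          rw [heq]; exact habs_nonneg i _
        · exact fun i _ => hfac β hβle i
      have hσprod : ∏ i, (((2 * β i : ℕ) : ℝ) ^ (2 * β i) * σ i ^ (2 * β i))
          = (∏ i, ((2 * β i : ℕ) : ℝ) ^ (2 * β i)) * ∏ i, (σ i ^ 2) ^ β i := by
        rw [← Finset.prod_mul_distrib]
        exact Finset.prod_congr rfl fun i _ => by rw [← pow_mul]
      have hmultR : (Nat.multinomial Finset.univ (fun j => 2 * β j) : ℝ)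
            * ∏ i, ((2 * β i : ℕ) : ℝ) ^ (2 * β i)
          ≤ ((2 * k : ℕ) : ℝ) ^ (2 * k) * (Nat.multinomial Finset.univ β : ℝ) := by
        have := mult_key' k β hβ.1
        exact_mod_cast this
      have hσp0 : (0:ℝ) ≤ ∏ i, (σ i ^ 2) ^ β i :=
        Finset.prod_nonneg fun i _ => pow_nonneg (sq_nonneg _) _
      calc (Nat.multinomial Finset.univ (fun j => 2 * β j) : ℝ)
              * ∏ i, ∫ ω, Z i ω ^ (2 * β i) ∂μ
          ≤ (Nat.multinomial Finset.univ (fun j => 2 * β j) : ℝ)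
              * ((∏ i, ((2 * β i : ℕ) : ℝ) ^ (2 * β i)) * ∏ i, (σ i ^ 2) ^ β i) := by
            rw [← hσprod]
            exact mul_le_mul_of_nonneg_left hprodle (Nat.cast_nonneg _)
        _ = ((Nat.multinomial Finset.univ (fun j => 2 * β j) : ℝ)
              * ∏ i, ((2 * β i : ℕ) : ℝ) ^ (2 * β i)) * ∏ i, (σ i ^ 2) ^ β i := by ring
        _ ≤ (((2 * k : ℕ) : ℝ) ^ (2 * k) * (Nat.multinomial Finset.univ β : ℝ))
              * ∏ i, (σ i ^ 2) ^ β i := mul_le_mul_of_nonneg_right hmultR hσp0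
        _ = ((2 * k : ℕ) : ℝ) ^ (2 * k) * (Nat.multinomial Finset.univ β : ℝ)
              * ∏ i, (σ i ^ 2) ^ β i := by ring
    -- total bound
    have htotal : ∫ ω, (∑ i, Z i ω) ^ (2 * k) ∂μ
        ≤ ((2 * k : ℕ) : ℝ) ^ (2 * k) * S ^ k := by
      rw [hfilter, hbij]
      calc ∑ β ∈ Finset.piAntidiag Finset.univ k,
              (Nat.multinomial Finset.univ (fun j => 2 * β j) : ℝ)
                * ∏ i, ∫ ω, Z i ω ^ (2 * β i) ∂μ
          ≤ ∑ β ∈ Finset.piAntidiag Finset.univ k,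
              ((2 * k : ℕ) : ℝ) ^ (2 * k) * (Nat.multinomial Finset.univ β : ℝ)
                * ∏ i, (σ i ^ 2) ^ β i := Finset.sum_le_sum hterm
        _ = ((2 * k : ℕ) : ℝ) ^ (2 * k) * ∑ β ∈ Finset.piAntidiag Finset.univ k,
              (Nat.multinomial Finset.univ β : ℝ) * ∏ i, (σ i ^ 2) ^ β i := by
            rw [Finset.mul_sum]
            exact Finset.sum_congr rfl fun β _ => by ring
        _ = ((2 * k : ℕ) : ℝ) ^ (2 * k) * S ^ k := by
            rw [← Finset.sum_pow_eq_sum_piAntidiag Finset.univ (fun i => σ i ^ 2) k]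
    -- finish with rpow
    have hR : (0:ℝ) ≤ ((2 * k : ℕ) : ℝ) * Real.sqrt S := by positivity
    have hpowR : (((2 * k : ℕ) : ℝ) * Real.sqrt S) ^ (2 * k)
        = ((2 * k : ℕ) : ℝ) ^ (2 * k) * S ^ k := by
      rw [mul_pow, pow_mul, pow_mul, Real.sq_sqrt hS0]
    have hI0 : 0 ≤ ∫ ω, (∑ i, Z i ω) ^ (2 * k) ∂μ :=
      integral_nonneg fun ω => (even_two_mul k).pow_nonneg _
    calc (∫ ω, (∑ i, Z i ω) ^ (2 * k) ∂μ) ^ (1 / ((2 * k : ℕ) : ℝ))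
        ≤ ((((2 * k : ℕ) : ℝ) * Real.sqrt S) ^ (2 * k)) ^ (1 / ((2 * k : ℕ) : ℝ)) := by
          refine Real.rpow_le_rpow hI0 ?_ (by positivity)
          rw [hpowR]; exact htotal
      _ = ((2 * k : ℕ) : ℝ) * Real.sqrt S := by
          rw [one_div, Real.pow_rpow_inv_natCast hR hℓ0]
  · -- odd case
    have hzero : ∫ ω, (∑ i, Z i ω) ^ ℓ ∂μ = 0 := by
      rw [key]
      refine Finset.sum_eq_zero fun α hα => ?_
      rw [Finset.mem_piAntidiag] at hα
      have : ∃ i, Odd (α i) := by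
        by_contra h
        push_neg at h
        have : Even (∑ i, α i) :=
          Finset.even_sum _ fun i _ => Nat.not_odd_iff_even.1 (h i)
        rw [hα.1] at this
        exact (Nat.not_even_iff_odd.2 hodd_ℓ) this
      rw [hodd_term α hα.1 this, mul_zero]
    rw [hzero, Real.zero_rpow (by positivity)]
    positivity
end

section
/- Let ρ be a positive semidefinite complex block matrix of the form ρ = [[A, B], [Bᴴ, C]], where A is a d₁ × d₁ matrix, C is a d₂ × d₂ matrix, and B is d₁ × d₂. Then Tr(A) · Tr(C) ≥ ‖B‖₁², where ‖B‖₁ = Tr(√(BᴴB)) denotes the trace norm of B. In particular, ‖B‖₁ ≤ Tr(ρ)/2. -/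
open Matrix ComplexOrder

/-- The trace norm (Schatten-1 norm) of a rectangular complex matrix:
`‖B‖₁ = Tr √(Bᴴ B)`, the sum of the singular values of `B`. -/
noncomputable def traceNorm {m n : Type*} [Fintype m] [Fintype n] [DecidableEq n]
    (B : Matrix m n ℂ) : ℝ :=
  (((Matrix.posSemidef_conjTranspose_mul_self B).1.eigenvectorUnitary : Matrix n n ℂ) *
    diagonal (((↑) : ℝ → ℂ) ∘ Real.sqrt ∘ (Matrix.posSemidef_conjTranspose_mul_self B).1.eigenvalues) *
    (star (Matrix.posSemidef_conjTranspose_mul_self B).1.eigenvectorUnitary : Matrix n n ℂ)).trace.re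

lemma psd_trace_re_nonneg {n : Type*} [Fintype n] {M : Matrix n n ℂ}
    (hM : M.PosSemidef) : 0 ≤ M.trace.re := by
  classical
  have h : ∀ i, 0 ≤ (M i i).re := by
    intro i
    have h0 := hM.re_dotProduct_nonneg (Pi.single i 1)
    simpa [dotProduct, Matrix.mulVec, Pi.single_apply, Finset.sum_ite_eq,
      apply_ite] using h0
  have h2 : M.trace.re = ∑ i, (M i i).re := by
    simp [Matrix.trace, Matrix.diag, Complex.re_sum]
  rw [h2]
  exact Finset.sum_nonneg fun i _ => h i

lemma quadform_eq {m l n : Type*} [Fintype m] [Fintype l]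
    (M : Matrix m l ℂ) (W : Matrix m n ℂ) (X : Matrix l n ℂ) (i : n) :
    star (fun k => W k i) ⬝ᵥ M *ᵥ (fun k => X k i) = (Wᴴ * M * X) i i := by
  rw [Matrix.mul_assoc]
  simp [Matrix.mul_apply, dotProduct, Matrix.mulVec, Matrix.conjTranspose_apply,
    Finset.mul_sum]

lemma key_ineq {d₁ d₂ : Type*} [Fintype d₁] [Fintype d₂]
    {A : Matrix d₁ d₁ ℂ} {B : Matrix d₁ d₂ ℂ} {C : Matrix d₂ d₂ ℂ}
    (hρ : (Matrix.fromBlocks A B Bᴴ C).PosSemidef) (x : d₁ → ℂ) (y : d₂ → ℂ) :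
    (star x ⬝ᵥ B *ᵥ y).re ^ 2 ≤ (star x ⬝ᵥ A *ᵥ x).re * (star y ⬝ᵥ C *ᵥ y).re := by
  have hconj : star y ⬝ᵥ Bᴴ *ᵥ x = star (star x ⬝ᵥ B *ᵥ y) := by
    rw [Matrix.star_dotProduct, Matrix.star_mulVec, Matrix.conjTranspose_conjTranspose,
      ← Matrix.dotProduct_mulVec]
  have h : ∀ t : ℝ, 0 ≤ (star x ⬝ᵥ A *ᵥ x).re * (t * t) +
      (2 * (star x ⬝ᵥ B *ᵥ y).re) * t + (star y ⬝ᵥ C *ᵥ y).re := by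
    intro t
    have h0 := hρ.re_dotProduct_nonneg (Sum.elim ((t : ℂ) • x) y)
    have expand : star (Sum.elim ((t:ℂ) • x) y) ⬝ᵥ
        (Matrix.fromBlocks A B Bᴴ C) *ᵥ (Sum.elim ((t:ℂ) • x) y)
        = ((t*t : ℝ) : ℂ) * (star x ⬝ᵥ A *ᵥ x) + ((t : ℝ) : ℂ) * (star x ⬝ᵥ B *ᵥ y)
          + ((t : ℝ) : ℂ) * (star y ⬝ᵥ Bᴴ *ᵥ x) + star y ⬝ᵥ C *ᵥ y := by
      simp only [Function.star_sumElim, Matrix.fromBlocks_mulVec,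
        sumElim_dotProduct_sumElim, Sum.elim_comp_inl, Sum.elim_comp_inr,
        Matrix.mulVec_smul, star_smul, Complex.star_def, Complex.conj_ofReal,
        dotProduct_add, smul_dotProduct, dotProduct_smul,
        smul_eq_mul, Complex.ofReal_mul]
      ring
    rw [expand] at h0
    simp only [Complex.add_re, Complex.re_ofReal_mul, hconj, Complex.star_def,
      Complex.conj_re, RCLike.re_to_complex] at h0 ⊢
    nlinarith [h0]
  have hd := discrim_le_zero h
  rw [discrim] at hd
  nlinarith [hd]

/-- For a positive semidefinite block matrix
`ρ = [[A, B], [Bᴴ, C]]` one has `Tr(A)·Tr(C) ≥ ‖B‖₁²`; in particular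
`‖B‖₁ ≤ Tr(ρ)/2` (Fact `tracepsd`). -/
theorem trace_mul_trace_ge_traceNorm_sq
    {d₁ d₂ : Type*} [Fintype d₁] [Fintype d₂] [DecidableEq d₁] [DecidableEq d₂]
    (A : Matrix d₁ d₁ ℂ) (B : Matrix d₁ d₂ ℂ) (C : Matrix d₂ d₂ ℂ)
    (hρ : (Matrix.fromBlocks A B Bᴴ C).PosSemidef) :
    traceNorm B ^ 2 ≤ A.trace.re * C.trace.re ∧
    traceNorm B ≤ (Matrix.fromBlocks A B Bᴴ C).trace.re / 2 := by
  classical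
  have hM := Matrix.posSemidef_conjTranspose_mul_self B
  set S : Matrix d₂ d₂ ℂ := (hM.1.eigenvectorUnitary : Matrix d₂ d₂ ℂ) *
    diagonal (((↑) : ℝ → ℂ) ∘ Real.sqrt ∘ hM.1.eigenvalues) *
    (star hM.1.eigenvectorUnitary : Matrix d₂ d₂ ℂ) with hSdef
  have hSpsd : S.PosSemidef := by
    have hd : (diagonal (((↑) : ℝ → ℂ) ∘ Real.sqrt ∘ hM.1.eigenvalues)).PosSemidef :=
      Matrix.posSemidef_diagonal_iff.mpr fun i => by
        simp only [Function.comp_apply]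
        exact_mod_cast Real.sqrt_nonneg _
    have := hd.mul_mul_conjTranspose_same (hM.1.eigenvectorUnitary : Matrix d₂ d₂ ℂ)
    rw [hSdef, Matrix.star_eq_conjTranspose]
    exact this
  have hH : S.IsHermitian := hSpsd.1
  set σ : d₂ → ℝ := hH.eigenvalues with hσdef
  have hσ0 : ∀ i, 0 ≤ σ i := hSpsd.eigenvalues_nonneg
  set V : Matrix d₂ d₂ ℂ := (hH.eigenvectorUnitary : Matrix d₂ d₂ ℂ) with hVdef
  set D : Matrix d₂ d₂ ℂ := Matrix.diagonal (fun i => (σ i : ℂ)) with hDdef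
  have hVV : Vᴴ * V = 1 := by
    rw [← Matrix.star_eq_conjTranspose]
    exact Matrix.mem_unitaryGroup_iff'.mp hH.eigenvectorUnitary.2
  have hVV' : V * Vᴴ = 1 := by
    rw [← Matrix.star_eq_conjTranspose]
    exact Matrix.mem_unitaryGroup_iff.mp hH.eigenvectorUnitary.2
  have hspec : S = V * D * Vᴴ := by
    have h := hH.spectral_theorem
    rw [Unitary.conjStarAlgAut_apply, Matrix.star_eq_conjTranspose] at h
    exact h
  -- Bᴴ B = V (D*D) Vᴴ
  have hBB : Bᴴ * B = V * (D * D) * Vᴴ := by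
    have h1 : S * S = Bᴴ * B := by
      have hUU : (star hM.1.eigenvectorUnitary : Matrix d₂ d₂ ℂ) *
          (hM.1.eigenvectorUnitary : Matrix d₂ d₂ ℂ) = 1 :=
        Matrix.mem_unitaryGroup_iff'.mp hM.1.eigenvectorUnitary.2
      have hdd : diagonal (((↑) : ℝ → ℂ) ∘ Real.sqrt ∘ hM.1.eigenvalues) *
          diagonal (((↑) : ℝ → ℂ) ∘ Real.sqrt ∘ hM.1.eigenvalues) =
          diagonal (RCLike.ofReal ∘ hM.1.eigenvalues) := by
        rw [Matrix.diagonal_mul_diagonal]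
        refine congrArg Matrix.diagonal (funext fun i => ?_)
        simp only [Function.comp_apply]
        rw [← Complex.ofReal_mul, Real.mul_self_sqrt (hM.eigenvalues_nonneg i)]
        rfl
      have hsp := hM.1.spectral_theorem
      rw [Unitary.conjStarAlgAut_apply] at hsp
      conv_rhs => rw [hsp]
      rw [hSdef, Matrix.mul_assoc _ _ (star _ : Matrix d₂ d₂ ℂ)]
      simp only [← Matrix.mul_assoc]
      rw [Matrix.mul_assoc _ (star _ : Matrix d₂ d₂ ℂ) _, hUU, Matrix.mul_one,
        Matrix.mul_assoc _ (diagonal _) (diagonal _), hdd]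
    rw [← h1, hspec, Matrix.mul_assoc (V * D) Vᴴ (V * D * Vᴴ),
      ← Matrix.mul_assoc Vᴴ (V * D) Vᴴ, ← Matrix.mul_assoc Vᴴ V D, hVV, Matrix.one_mul,
      ← Matrix.mul_assoc, Matrix.mul_assoc V D D]
  -- trace norm = sum of eigenvalues
  have htn : traceNorm B = ∑ i, σ i := by
    show S.trace.re = _
    rw [hspec, Matrix.trace_mul_cycle, hVV, Matrix.one_mul, Matrix.trace_diagonal]
    simp [Complex.re_sum]
  -- the partial isometry U
  set g : d₂ → ℂ := fun i => (((σ i)⁻¹ : ℝ) : ℂ) with hgdef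
  set G : Matrix d₂ d₂ ℂ := Matrix.diagonal g with hGdef
  set U : Matrix d₁ d₂ ℂ := B * V * G with hUdef
  have hGH : Gᴴ = G := by
    have hsg : star g = g := by
      funext i; simp [hgdef, Complex.star_def, Complex.conj_ofReal]
    rw [hGdef, Matrix.diagonal_conjTranspose, hsg]
  have hUH : Uᴴ = G * (Vᴴ * Bᴴ) := by
    rw [hUdef, Matrix.conjTranspose_mul, Matrix.conjTranspose_mul, hGH]
  have hmid : Vᴴ * (Bᴴ * B) * V = D * D := by
    rw [hBB, Matrix.mul_assoc V (D*D) Vᴴ, ← Matrix.mul_assoc Vᴴ V ((D*D) * Vᴴ), hVV,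
      Matrix.one_mul, Matrix.mul_assoc, hVV, Matrix.mul_one]
  have hUBV : Uᴴ * B * V = G * (D * D) := by
    rw [hUH, Matrix.mul_assoc G (Vᴴ * Bᴴ) B, Matrix.mul_assoc Vᴴ Bᴴ B,
      Matrix.mul_assoc G (Vᴴ * (Bᴴ * B)) V, hmid]
  set e : d₂ → ℂ := fun i => if σ i = 0 then 0 else 1 with hedef
  have hassoc : Uᴴ * U = Uᴴ * B * V * G := by
    rw [hUdef]; simp only [Matrix.mul_assoc]
  have hUU : Uᴴ * U = Matrix.diagonal e := by
    rw [hassoc, hUBV, hGdef, hDdef]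
    simp only [Matrix.diagonal_mul_diagonal]
    refine congrArg Matrix.diagonal (funext fun i => ?_)
    by_cases h : σ i = 0
    · simp [hedef, h]
    · have key : ((σ i)⁻¹ * (σ i * σ i) * (σ i)⁻¹ : ℝ) = 1 := by field_simp
      simp only [hgdef, hedef, if_neg h]
      norm_cast
  have hUe : U * (Uᴴ * U) = U := by
    have hge : (fun i => g i * e i) = g := by
      funext i
      by_cases h : σ i = 0 <;> simp [hgdef, hedef, h]
    rw [hUU, hUdef, Matrix.mul_assoc (B * V) G (Matrix.diagonal e), hGdef,
      Matrix.diagonal_mul_diagonal, hge]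
  set P : Matrix d₁ d₁ ℂ := U * Uᴴ with hPdef
  have hPH : Pᴴ = P := by rw [hPdef, Matrix.conjTranspose_mul, Matrix.conjTranspose_conjTranspose]
  have hPP : P * P = P := by
    rw [hPdef, Matrix.mul_assoc U Uᴴ (U * Uᴴ), ← Matrix.mul_assoc Uᴴ U Uᴴ,
      ← Matrix.mul_assoc U (Uᴴ * U) Uᴴ, hUe]
  set Q : Matrix d₁ d₁ ℂ := 1 - P with hQdef
  have hQH : Qᴴ = Q := by rw [hQdef, Matrix.conjTranspose_sub, Matrix.conjTranspose_one, hPH]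
  have hQQ : Q * Q = Q := by
    rw [hQdef, Matrix.sub_mul, Matrix.one_mul, Matrix.mul_sub, Matrix.mul_one, hPP]
    abel
  -- PSD of diagonal blocks
  have hApsd : A.PosSemidef := by
    have h := hρ.submatrix Sum.inl
    have he : (Matrix.fromBlocks A B Bᴴ C).submatrix Sum.inl Sum.inl = A := by
      ext i j; simp [Matrix.submatrix_apply]
    rwa [he] at h
  have hCpsd : C.PosSemidef := by
    have h := hρ.submatrix Sum.inr
    have he : (Matrix.fromBlocks A B Bᴴ C).submatrix Sum.inr Sum.inr = C := by
      ext i j; simp [Matrix.submatrix_apply]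
    rwa [he] at h
  -- trace comparison
  have hTrAP : (A * P).trace.re ≤ A.trace.re := by
    have hpsd : (Q * A * Qᴴ).PosSemidef := hApsd.mul_mul_conjTranspose_same Q
    rw [hQH] at hpsd
    have h0 : 0 ≤ (Q * A * Q).trace.re := psd_trace_re_nonneg hpsd
    have h1 : (Q * A * Q).trace = A.trace - (A * P).trace := by
      rw [Matrix.trace_mul_cycle Q A Q, hQQ, hQdef, Matrix.sub_mul, Matrix.one_mul,
        Matrix.trace_sub, Matrix.trace_mul_comm P A]
    rw [h1, Complex.sub_re] at h0
    linarith
  set a : d₂ → ℝ := fun i => ((Uᴴ * A * U) i i).re with hadef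
  set c : d₂ → ℝ := fun i => ((Vᴴ * C * V) i i).re with hcdef
  have ha0 : ∀ i, 0 ≤ a i := by
    intro i
    have h := hApsd.re_dotProduct_nonneg (fun k => U k i)
    rwa [RCLike.re_to_complex, quadform_eq] at h
  have hc0 : ∀ i, 0 ≤ c i := by
    intro i
    have h := hCpsd.re_dotProduct_nonneg (fun k => V k i)
    rwa [RCLike.re_to_complex, quadform_eq] at h
  have hsuma : ∑ i, a i ≤ A.trace.re := by
    have h1 : ∑ i, a i = (Uᴴ * A * U).trace.re := by
      simp [hadef, Matrix.trace, Matrix.diag, Complex.re_sum]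
    have h2 : (Uᴴ * A * U).trace = (A * P).trace := by
      rw [Matrix.trace_mul_cycle Uᴴ A U, Matrix.trace_mul_comm]
    rw [h1, h2]
    exact hTrAP
  have hsumc : ∑ i, c i = C.trace.re := by
    have h1 : ∑ i, c i = (Vᴴ * C * V).trace.re := by
      simp [hcdef, Matrix.trace, Matrix.diag, Complex.re_sum]
    have h2 : (Vᴴ * C * V).trace = C.trace := by
      rw [Matrix.trace_mul_cycle Vᴴ C V, hVV', Matrix.one_mul]
    rw [h1, h2]
  -- per-index inequality
  have hb : ∀ i, σ i ≤ Real.sqrt (a i) * Real.sqrt (c i) := by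
    intro i
    rcases eq_or_ne (σ i) 0 with h | h
    · rw [h]; positivity
    · have hk := key_ineq hρ (fun k => U k i) (fun k => V k i)
      rw [quadform_eq, quadform_eq, quadform_eq] at hk
      have hdiag : ((Uᴴ * B * V) i i).re = σ i := by
        rw [hUBV, hGdef, hDdef, Matrix.diagonal_mul_diagonal, Matrix.diagonal_mul_diagonal,
          Matrix.diagonal_apply_eq]
        have key : ((σ i)⁻¹ * (σ i * σ i) : ℝ) = σ i := by field_simp
        simp only [hgdef, Pi.mul_apply]
        rw [show ((((σ i)⁻¹ : ℝ)) : ℂ) * (((σ i : ℝ) : ℂ) * ((σ i : ℝ) : ℂ))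
            = (((σ i)⁻¹ * (σ i * σ i) : ℝ) : ℂ) by push_cast; ring, key, Complex.ofReal_re]
      rw [hdiag] at hk
      calc σ i = Real.sqrt ((σ i) ^ 2) := (Real.sqrt_sq (hσ0 i)).symm
        _ ≤ Real.sqrt (a i * c i) := Real.sqrt_le_sqrt hk
        _ = Real.sqrt (a i) * Real.sqrt (c i) := Real.sqrt_mul (ha0 i) _
  -- assemble
  have hx : 0 ≤ A.trace.re := psd_trace_re_nonneg hApsd
  have hy : 0 ≤ C.trace.re := psd_trace_re_nonneg hCpsd
  have hchain : traceNorm B ≤ Real.sqrt A.trace.re * Real.sqrt C.trace.re := by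
    rw [htn]
    calc ∑ i, σ i ≤ ∑ i, Real.sqrt (a i) * Real.sqrt (c i) :=
          Finset.sum_le_sum fun i _ => hb i
      _ ≤ Real.sqrt (∑ i, a i) * Real.sqrt (∑ i, c i) :=
          Real.sum_sqrt_mul_sqrt_le _ ha0 hc0
      _ ≤ Real.sqrt A.trace.re * Real.sqrt C.trace.re := by
          exact mul_le_mul (Real.sqrt_le_sqrt hsuma) (Real.sqrt_le_sqrt hsumc.le)
            (Real.sqrt_nonneg _) (Real.sqrt_nonneg _)
  have htn0 : 0 ≤ traceNorm B := by
    rw [htn]; exact Finset.sum_nonneg fun i _ => hσ0 i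
  constructor
  · have h1 : traceNorm B ^ 2 ≤ (Real.sqrt A.trace.re * Real.sqrt C.trace.re) ^ 2 :=
      pow_le_pow_left₀ htn0 hchain 2
    have h2 : (Real.sqrt A.trace.re * Real.sqrt C.trace.re) ^ 2 = A.trace.re * C.trace.re := by
      rw [mul_pow, Real.sq_sqrt hx, Real.sq_sqrt hy]
    exact h1.trans_eq h2
  · have htr : (Matrix.fromBlocks A B Bᴴ C).trace.re = A.trace.re + C.trace.re := by
      simp [Matrix.trace, Matrix.diag, Fintype.sum_sum_type, Complex.re_sum]
    rw [htr]
    have ham : Real.sqrt A.trace.re * Real.sqrt C.trace.re ≤ (A.trace.re + C.trace.re) / 2 := by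
      nlinarith [sq_nonneg (Real.sqrt A.trace.re - Real.sqrt C.trace.re),
        Real.sq_sqrt hx, Real.sq_sqrt hy]
    linarith [hchain]
end

section
/- Let σ be a d × d diagonal density matrix with σ_{i₁ i₁} ≥ 3/4 for some index i₁, let i₂ ≠ i₁, fix 0 < ε ≤ 1/2, and for u ∈ {+1, −1} define σ^u as the matrix agreeing with σ except σ^u_{i₁ i₁} = σ_{i₁ i₁} − ε², σ^u_{i₂ i₂} = σ_{i₂ i₂} + ε², σ^u_{i₁ i₂} = σ^u_{i₂ i₁} = (ε/2)·u. Then for every vector v ∈ ℂ^d supported on the coordinates {i₁, i₂} with vᴴ σ v > 0, one has (vᴴ σ^{+1} v) · (vᴴ σ^{−1} v) ≥ (1 − 32ε²/9) · (vᴴ σ v)². -/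
open Matrix ComplexOrder

lemma aux_ineq (l1 l2 ε x y R : ℝ) (hx : 0 ≤ x) (hy : 0 ≤ y) (hR : R^2 ≤ x*y)
    (h1 : 3/4 ≤ l1) (h2 : 0 ≤ l2) :
    (1 - 32*ε^2/9) * (l1*x + l2*y)^2
      ≤ ((l1-ε^2)*x + (l2+ε^2)*y + ε*R) * ((l1-ε^2)*x + (l2+ε^2)*y - ε*R) := by
  have t1 : 0 ≤ x^2*(32*l1^2/9 - 2*l1) := mul_nonneg (sq_nonneg x) (by nlinarith)
  have t2 : 0 ≤ y^2*(2*l2 + 32*l2^2/9) := mul_nonneg (sq_nonneg y) (by nlinarith)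
  have t3 : 0 ≤ x*y*(2*l1 - 1 - 2*l2 + 64*l1*l2/9) :=
    mul_nonneg (mul_nonneg hx hy) (by nlinarith)
  nlinarith [mul_nonneg (sq_nonneg ε) t1, mul_nonneg (sq_nonneg ε) t2,
    mul_nonneg (sq_nonneg ε) t3, sq_nonneg (ε*ε*(y-x)),
    mul_nonneg (sq_nonneg ε) (by linarith : 0 ≤ x*y - R^2)]


/-- (Key estimate in Lemma `corner`.) With `σ` a diagonal density
matrix whose `i₁`-th entry is at least `3/4`, and `σ^{±1}` the corner
perturbations, for every vector `v` supported on `{i₁, i₂}` with `vᴴ σ v > 0`,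
`(vᴴ σ^{+1} v)(vᴴ σ^{−1} v) ≥ (1 − 32ε²/9)(vᴴ σ v)²`. -/
theorem corner_likelihood_product_bound
    {d : ℕ} (lam : Fin d → ℝ) (hnn : ∀ i, 0 ≤ lam i) (hsum1 : ∑ i, lam i = 1)
    (i₁ i₂ : Fin d) (hne : i₂ ≠ i₁) (hbig : 3 / 4 ≤ lam i₁)
    (ε : ℝ) (hε : 0 < ε) (hεle : ε ≤ 1 / 2)
    (σ σp σm : Matrix (Fin d) (Fin d) ℂ)
    (hσ : σ = Matrix.diagonal (fun i => (lam i : ℂ)))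
    (hσp : ∀ a b : Fin d, σp a b =
      if a = i₁ ∧ b = i₁ then ((lam i₁ - ε ^ 2 : ℝ) : ℂ)
      else if a = i₂ ∧ b = i₂ then ((lam i₂ + ε ^ 2 : ℝ) : ℂ)
      else if (a = i₁ ∧ b = i₂) ∨ (a = i₂ ∧ b = i₁) then ((ε / 2 : ℝ) : ℂ)
      else σ a b)
    (hσm : ∀ a b : Fin d, σm a b =
      if a = i₁ ∧ b = i₁ then ((lam i₁ - ε ^ 2 : ℝ) : ℂ)
      else if a = i₂ ∧ b = i₂ then ((lam i₂ + ε ^ 2 : ℝ) : ℂ)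
      else if (a = i₁ ∧ b = i₂) ∨ (a = i₂ ∧ b = i₁) then ((-(ε / 2) : ℝ) : ℂ)
      else σ a b)
    (v : Fin d → ℂ) (hsupp : ∀ i, i ≠ i₁ → i ≠ i₂ → v i = 0)
    (hpos : 0 < (star v ⬝ᵥ σ.mulVec v).re) :
    (1 - 32 * ε ^ 2 / 9) * ((star v ⬝ᵥ σ.mulVec v).re) ^ 2
      ≤ (star v ⬝ᵥ σp.mulVec v).re * (star v ⬝ᵥ σm.mulVec v).re := by
  set a := v i₁ with ha
  set b := v i₂ with hb
  have hsum : ∀ f : Fin d → ℂ, (∀ i, i ≠ i₁ → i ≠ i₂ → f i = 0) →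
      ∑ i, f i = f i₁ + f i₂ := by
    intro f hf
    rw [← Finset.sum_subset (Finset.subset_univ {i₁, i₂})]
    · rw [Finset.sum_pair (Ne.symm hne)]
    · intro x _ hx
      simp only [Finset.mem_insert, Finset.mem_singleton, not_or] at hx
      exact hf x hx.1 hx.2
  have key : ∀ M : Matrix (Fin d) (Fin d) ℂ,
      star v ⬝ᵥ M.mulVec v =
        (starRingEnd ℂ a) * (M i₁ i₁ * a + M i₁ i₂ * b)
          + (starRingEnd ℂ b) * (M i₂ i₁ * a + M i₂ i₂ * b) := by
    intro M
    have hmv : ∀ i, M.mulVec v i = M i i₁ * a + M i i₂ * b := by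
      intro i
      rw [Matrix.mulVec, dotProduct, hsum (fun j => M i j * v j)
        (fun j hj1 hj2 => by simp [hsupp j hj1 hj2])]
    rw [dotProduct, hsum (fun i => star v i * M.mulVec v i)
      (fun i hi1 hi2 => by simp [hsupp i hi1 hi2])]
    simp [hmv]
    rfl
  have hne' : i₁ ≠ i₂ := Ne.symm hne
  have Eσ : star v ⬝ᵥ σ.mulVec v =
      (starRingEnd ℂ a) * ((lam i₁ : ℂ) * a) + (starRingEnd ℂ b) * ((lam i₂ : ℂ) * b) := by
    rw [key σ, hσ]
    simp [Matrix.diagonal, hne, hne']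
  have Eσp : star v ⬝ᵥ σp.mulVec v =
      (starRingEnd ℂ a) * (((lam i₁ - ε^2 : ℝ) : ℂ) * a + ((ε/2 : ℝ) : ℂ) * b)
        + (starRingEnd ℂ b) * (((ε/2 : ℝ) : ℂ) * a + ((lam i₂ + ε^2 : ℝ) : ℂ) * b) := by
    rw [key σp, hσp i₁ i₁, hσp i₁ i₂, hσp i₂ i₁, hσp i₂ i₂]
    simp [hne, hne']
  have Eσm : star v ⬝ᵥ σm.mulVec v =
      (starRingEnd ℂ a) * (((lam i₁ - ε^2 : ℝ) : ℂ) * a + ((-(ε/2) : ℝ) : ℂ) * b)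
        + (starRingEnd ℂ b) * (((-(ε/2) : ℝ) : ℂ) * a + ((lam i₂ + ε^2 : ℝ) : ℂ) * b) := by
    rw [key σm, hσm i₁ i₁, hσm i₁ i₂, hσm i₂ i₁, hσm i₂ i₂]
    simp [hne, hne']
  set x := a.re^2 + a.im^2 with hx
  set y := b.re^2 + b.im^2 with hy
  set R := a.re*b.re + a.im*b.im with hR
  have hxnn : 0 ≤ x := by positivity
  have hynn : 0 ≤ y := by positivity
  have hRxy : R^2 ≤ x*y := by rw [hx, hy, hR]; nlinarith [sq_nonneg (a.re*b.im - a.im*b.re)]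
  have rσ : (star v ⬝ᵥ σ.mulVec v).re = lam i₁ * x + lam i₂ * y := by
    rw [Eσ]; simp [Complex.add_re, Complex.mul_re, Complex.mul_im]; ring
  have rσp : (star v ⬝ᵥ σp.mulVec v).re =
      (lam i₁ - ε^2)*x + (lam i₂ + ε^2)*y + ε*R := by
    rw [Eσp]; simp [Complex.add_re, Complex.mul_re, Complex.mul_im,
      Complex.add_im, ← Complex.ofReal_pow]; ring
  have rσm : (star v ⬝ᵥ σm.mulVec v).re =
      (lam i₁ - ε^2)*x + (lam i₂ + ε^2)*y - ε*R := by
    rw [Eσm]; simp [Complex.add_re, Complex.mul_re, Complex.mul_im,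
      Complex.add_im, ← Complex.ofReal_pow]; ring
  rw [rσ, rσp, rσm]
  exact aux_ineq (lam i₁) (lam i₂) ε x y R hxnn hynn hRxy hbig (hnn i₂)
end

section
/- Let X_1, ..., X_t be real-valued random variables on a common probability space (not necessarily independent) such that for every i: |X_i| ≤ 1/2 almost surely, E[X_i] = 0, and E[X_i²] ≤ ς² for some ς ≥ 0. Then E[ ∏_{i=1}^{t} (1 + X_i) ] ≥ exp(−ς² · t). -/
open MeasureTheory

private lemma key_deriv (x : ℝ) :
    HasDerivAt (fun y : ℝ => (1 + y) * Real.exp (y ^ 2 - y))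
      (Real.exp (x ^ 2 - x) * (2 * x ^ 2 + x)) x := by
  have h1 : HasDerivAt (fun y : ℝ => 1 + y) 1 x := by
    simpa using (hasDerivAt_id x).const_add 1
  have h2 : HasDerivAt (fun y : ℝ => y ^ 2 - y) (2 * x - 1) x := by
    simpa [Pi.sub_def] using (hasDerivAt_pow 2 x).sub (hasDerivAt_id x)
  have h3 := h2.exp
  have := h1.mul h3
  refine this.congr_deriv ?_
  ring

private lemma key_ineq_s19 (x : ℝ) (hx : |x| ≤ 1 / 2) :
    Real.exp (x - x ^ 2) ≤ 1 + x := by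
  have hg : 1 ≤ (1 + x) * Real.exp (x ^ 2 - x) := by
    rcases le_or_gt x 0 with hx0 | hx0
    · have hx' : -(1/2) ≤ x := (abs_le.1 hx).1
      have hmono : AntitoneOn (fun y : ℝ => (1 + y) * Real.exp (y ^ 2 - y))
          (Set.Icc (-(1/2)) 0) := by
        apply antitoneOn_of_hasDerivWithinAt_nonpos (convex_Icc _ _)
        · exact fun y _ => (key_deriv y).continuousAt.continuousWithinAt
        · exact fun y _ => (key_deriv y).hasDerivWithinAt
        · intro y hy
          rw [interior_Icc] at hy
          have h1 : y < 0 := hy.2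
          have h2 : -(1/2) < y := hy.1
          have : 2 * y ^ 2 + y ≤ 0 := by nlinarith
          exact mul_nonpos_of_nonneg_of_nonpos (Real.exp_pos _).le this
      have := hmono ⟨hx', hx0⟩ (by constructor <;> norm_num) hx0
      simpa using this
    · have hx' : x ≤ 1/2 := (abs_le.1 hx).2
      have hmono : MonotoneOn (fun y : ℝ => (1 + y) * Real.exp (y ^ 2 - y))
          (Set.Icc 0 (1/2)) := by
        apply monotoneOn_of_hasDerivWithinAt_nonneg (convex_Icc _ _)
        · exact fun y _ => (key_deriv y).continuousAt.continuousWithinAt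
        · exact fun y _ => (key_deriv y).hasDerivWithinAt
        · intro y hy
          rw [interior_Icc] at hy
          have h1 : 0 < y := hy.1
          have : 0 ≤ 2 * y ^ 2 + y := by nlinarith
          exact mul_nonneg (Real.exp_pos _).le this
      have := hmono (by constructor <;> norm_num) ⟨hx0.le, hx'⟩ hx0.le
      simpa using this
  have hpos : 0 < Real.exp (x ^ 2 - x) := Real.exp_pos _
  rw [show x - x ^ 2 = -(x ^ 2 - x) by ring, Real.exp_neg]
  rw [inv_le_iff_one_le_mul₀ hpos]
  linarith [hg]

/-- (Abstract content of Lemma `symimpliesDelta`.) If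
`X_1, …, X_t` are (not necessarily independent) random variables with
`|X_i| ≤ 1/2` a.s., `E[X_i] = 0` and `E[X_i²] ≤ ς²`, then
`E[∏_i (1 + X_i)] ≥ exp(−ς² t)`. -/
theorem product_likelihood_lower_bound
    {Ω : Type*} [MeasurableSpace Ω] (μ : Measure Ω) [IsProbabilityMeasure μ]
    (t : ℕ) (X : Fin t → Ω → ℝ) (ς : ℝ) (hς : 0 ≤ ς)
    (hmeas : ∀ i, Measurable (X i))
    (hbdd : ∀ i, ∀ᵐ ω ∂μ, |X i ω| ≤ 1 / 2)
    (hmean : ∀ i, ∫ ω, X i ω ∂μ = 0)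
    (hvar : ∀ i, ∫ ω, (X i ω) ^ 2 ∂μ ≤ ς ^ 2) :
    Real.exp (-ς ^ 2 * t) ≤ ∫ ω, ∏ i, (1 + X i ω) ∂μ := by
  -- a.e. all bounded
  have hae : ∀ᵐ ω ∂μ, ∀ i, |X i ω| ≤ 1 / 2 := ae_all_iff.2 hbdd
  set S : Ω → ℝ := fun ω => ∑ i, (X i ω - (X i ω) ^ 2) with hS
  -- measurability
  have hSmeas : Measurable S :=
    Finset.measurable_sum _ fun i _ => ((hmeas i).sub ((hmeas i).pow_const 2))
  have hPmeas : Measurable (fun ω => ∏ i, (1 + X i ω)) :=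
    Finset.measurable_prod _ fun i _ => (measurable_const.add (hmeas i))
  -- integrability of each X i and X i ^ 2
  have hXint : ∀ i, Integrable (X i) μ := fun i =>
    (integrable_const (1/2 : ℝ)).mono' (hmeas i).aestronglyMeasurable
      ((hbdd i).mono fun ω h => by simpa using h)
  have hX2int : ∀ i, Integrable (fun ω => (X i ω) ^ 2) μ := fun i =>
    (integrable_const (1/4 : ℝ)).mono' ((hmeas i).pow_const 2).aestronglyMeasurable
      ((hbdd i).mono fun ω h => by
        rw [Real.norm_eq_abs, abs_pow]
        nlinarith [abs_nonneg (X i ω)])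
  have hSint : Integrable S μ :=
    integrable_finset_sum _ fun i _ => (hXint i).sub (hX2int i)
  -- integrability of exp ∘ S via bound exp t
  have hSbound : ∀ᵐ ω ∂μ, S ω ≤ t := by
    filter_upwards [hae] with ω h
    calc S ω ≤ ∑ _i : Fin t, (1 : ℝ) := by
          apply Finset.sum_le_sum
          intro i _
          have := h i
          have h1 := abs_le.1 this
          nlinarith [h1.1, h1.2]
      _ = t := by simp
  have hexpint : Integrable (fun ω => Real.exp (S ω)) μ := by
    apply (integrable_const (Real.exp t)).mono'
      (hSmeas.exp).aestronglyMeasurable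
    filter_upwards [hSbound] with ω h
    rw [Real.norm_eq_abs, abs_of_pos (Real.exp_pos _)]
    exact Real.exp_le_exp.2 h
  -- integrability of the product via bound (3/2)^t
  have hPint : Integrable (fun ω => ∏ i, (1 + X i ω)) μ := by
    apply (integrable_const ((3/2 : ℝ) ^ t)).mono' hPmeas.aestronglyMeasurable
    filter_upwards [hae] with ω h
    rw [Real.norm_eq_abs, Finset.abs_prod]
    calc ∏ i, |1 + X i ω| ≤ ∏ _i : Fin t, (3/2 : ℝ) := by
          apply Finset.prod_le_prod (fun i _ => abs_nonneg _)
          intro i _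
          have h1 := abs_le.1 (h i)
          rw [abs_le]; constructor <;> linarith [h1.1, h1.2]
      _ = (3/2 : ℝ) ^ t := by simp [div_pow]
  -- pointwise: exp (S ω) ≤ ∏ (1 + X i ω) a.e.
  have hptwise : ∀ᵐ ω ∂μ, Real.exp (S ω) ≤ ∏ i, (1 + X i ω) := by
    filter_upwards [hae] with ω h
    rw [hS, Real.exp_sum]
    apply Finset.prod_le_prod (fun i _ => (Real.exp_pos _).le)
    intro i _
    exact key_ineq_s19 _ (h i)
  -- Jensen
  have hjensen : Real.exp (∫ ω, S ω ∂μ) ≤ ∫ ω, Real.exp (S ω) ∂μ := by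
    have := (convexOn_exp).map_integral_le (s := Set.univ)
      Real.continuous_exp.continuousOn isClosed_univ
      (Filter.Eventually.of_forall fun ω => Set.mem_univ _) hSint
      (by simpa [Function.comp_def] using hexpint)
    simpa using this
  -- compute ∫ S
  have hSval : ∫ ω, S ω ∂μ = ∑ i, (0 - ∫ ω, (X i ω) ^ 2 ∂μ) := by
    rw [hS, integral_finset_sum (f := fun i ω => X i ω - X i ω ^ 2) _
      (fun i _ => (hXint i).sub (hX2int i))]
    congr 1
    ext i
    rw [integral_sub (hXint i) (hX2int i), hmean i]
  have hSge : -ς ^ 2 * t ≤ ∫ ω, S ω ∂μ := by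
    rw [hSval]
    calc (-ς ^ 2 * t : ℝ) = ∑ _i : Fin t, (-ς ^ 2) := by
          simp [mul_comm]
      _ ≤ ∑ i, (0 - ∫ ω, (X i ω) ^ 2 ∂μ) := by
          apply Finset.sum_le_sum
          intro i _
          have := hvar i
          linarith
  calc Real.exp (-ς ^ 2 * t) ≤ Real.exp (∫ ω, S ω ∂μ) := Real.exp_le_exp.2 hSge
    _ ≤ ∫ ω, Real.exp (S ω) ∂μ := hjensen
    _ ≤ ∫ ω, ∏ i, (1 + X i ω) ∂μ := integral_mono_ae hexpint hPint hptwise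
end
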